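/- If a binary cubic form σ has negative discriminant, then σ factors as σ = ℓ · q, where ℓ is a nonzero real linear form and q is a positive definite (or negative definite) real binary quadratic form. -/

import Mathlib

open Polynomial in
lemma cubic_has_real_root (a b c d : ℝ) (ha : a ≠ 0) :
    ∃ t : ℝ, a*t^3 + b*t^2 + c*t + d = 0 := by
  have hdeg : (C (a:ℂ) * X^3 + C (b:ℂ) * X^2 + C (c:ℂ) * X + C (d:ℂ)).degree = 3 := by
    compute_degree!
  obtain ⟨z, hz⟩ := Complex.exists_root (f := C (a:ℂ) * X^3 + C (b:ℂ) * X^2 + C (c:ℂ) * X + C (d:ℂ))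
    (by rw [hdeg]; norm_num)
  simp only [IsRoot, eval_add, eval_mul, eval_pow, eval_C, eval_X] at hz
  by_cases him : z.im = 0
  · refine ⟨z.re, ?_⟩
    have hzre : z = (z.re : ℂ) := Complex.ext rfl (by simp [him])
    rw [hzre] at hz
    exact_mod_cast hz
  · set x := z.re with hx
    set t : ℝ := (-b - 2*a*x)/a with htdef
    have hat : a * t = -b - 2*a*x := by rw [htdef]; field_simp
    set γ : ℝ := z.re^2 + z.im^2 with hγ
    have hq : z^2 - 2*(x:ℂ)*z + (γ:ℂ) = 0 := by
      apply Complex.ext <;>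
        simp [pow_two, Complex.mul_re, Complex.mul_im, hγ, hx] <;> ring
    have hatC : (a:ℂ) * t = -b - 2*a*x := by exact_mod_cast hat
    have hlin : ((c - a*γ - 2*a*t*x : ℝ) : ℂ) * z + ((d + a*t*γ : ℝ) : ℂ) = 0 := by
      push_cast
      linear_combination hz - ((a:ℂ)*(z - t)) * hq - (z^2) * hatC
    have h1 : (c - a*γ - 2*a*t*x) * z.im = 0 := by
      simpa using congrArg Complex.im hlin
    have hc : c - a*γ - 2*a*t*x = 0 := by
      rcases mul_eq_zero.1 h1 with h | h
      · exact h
      · exact absurd h him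
    have hd : d + a*t*γ = 0 := by
      have h2 := congrArg Complex.re hlin
      simp [hc] at h2
      exact h2
    exact ⟨t, by linear_combination t^2 * hat + t * hc + hd⟩

/-- A binary cubic form with negative discriminant factors as a nonzero real linear form
times a definite real binary quadratic form (one with negative discriminant r² − ps). -/
theorem cubic_form_neg_disc_factors_linear_times_definite_quadratic
    (a₁ a₂ a₃ a₄ : ℝ)
    (hΔ : 6*a₁*a₂*a₃*a₄ - 4*(a₁*a₃^3 + a₄*a₂^3) + 3*a₂^2*a₃^2 - a₁^2*a₄^2 < 0) :
    ∃ α β p r s : ℝ, (α, β) ≠ (0, 0) ∧ r^2 - p*s < 0 ∧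
      ∀ w₁ w₂ : ℝ,
        a₁*w₁^3 + 3*a₂*w₁^2*w₂ + 3*a₃*w₁*w₂^2 + a₄*w₂^3
          = (α*w₁ + β*w₂) * (p*w₁^2 + 2*r*w₁*w₂ + s*w₂^2) := by
  by_cases ha₁ : a₁ = 0
  · subst ha₁
    refine ⟨0, 1, 3*a₂, 3*a₃/2, a₄, by simp, ?_, fun w₁ w₂ => by ring⟩
    have h2 : a₂^2 * (3*a₃^2 - 4*a₂*a₄) < 0 := by nlinarith
    have h3 : 3*a₃^2 - 4*a₂*a₄ < 0 := by
      by_contra h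
      push_neg at h
      nlinarith [sq_nonneg a₂]
    nlinarith
  · obtain ⟨t, ht⟩ := cubic_has_real_root a₁ (3*a₂) (3*a₃) a₄ ha₁
    set b : ℝ := 3*a₂ + a₁*t with hb
    set c : ℝ := 3*a₃ + 3*a₂*t + a₁*t^2 with hc
    clear_value b c
    have key : (b^2 - 4*a₁*c) * (a₁*t^2 + b*t + c)^2
        = 27*(6*a₁*a₂*a₃*a₄ - 4*(a₁*a₃^3 + a₄*a₂^3) + 3*a₂^2*a₃^2 - a₁^2*a₄^2) := by
      rw [hb, hc]
      linear_combination
        (108*a₂^3 - 162*a₁*a₂*a₃ + 27*a₁^2*a₄ - 81*a₁^2*a₃*t - 81*a₁^2*a₂*t^2 - 27*a₁^3*t^3) * ht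
    have hDq : b^2 - 4*a₁*c < 0 := by
      by_contra h
      push_neg at h
      nlinarith [sq_nonneg (a₁*t^2 + b*t + c)]
    refine ⟨1, -t, a₁, b/2, c, ?_, by rw [show (b/2)^2 - a₁*c = (b^2-4*a₁*c)/4 by ring]; linarith, fun w₁ w₂ => ?_⟩
    · simp [Prod.ext_iff]
    · rw [hb, hc]
      linear_combination w₂^3 * ht
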